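/- Let G be a graph on {1,...,n} with twin pair (1,2), and let G \ 1 be the graph obtained by deleting vertex 1. Then the quadratic forms f_G(x) = x^T(A_G+I)x and f_{G\1}(y) = y^T(A_{G\1}+I)y (in variables x_2,...,x_n) satisfy the identity f_G(x_1, x_2, x_3, ..., x_n) = f_{G\1}(x_1 + x_2, x_3, ..., x_n). -/
import Mathlib


open Finset Matrix

open Classical in
/-- If `(a,b)` is a twin pair of `G`, then the Motzkin–Straus quadratic form of `G` is obtained
from that of `G \ a` by substituting `x_b ↦ x_a + x_b`:
`f_G(x) = f_{G \ a}(…, x_a + x_b, …)`. -/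
theorem twin_pair_quadratic_form_identity {n : ℕ} (G : SimpleGraph (Fin n))
    [DecidableRel G.Adj] (a b : Fin n) (hadj : G.Adj a b)
    (htwin : G.neighborSet a \ {b} = G.neighborSet b \ {a}) :
    ∀ x : Fin n → ℝ,
      x ⬝ᵥ ((G.adjMatrix ℝ + 1) *ᵥ x) =
        (fun v : {v : Fin n // v ≠ a} => if (v : Fin n) = b then x a + x b else x v) ⬝ᵥ
          (((G.induce {v | v ≠ a}).adjMatrix ℝ + 1) *ᵥ
            fun v : {v : Fin n // v ≠ a} => if (v : Fin n) = b then x a + x b else x v) := by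
  intro x
  have hab : a ≠ b := G.ne_of_adj hadj
  set M : Matrix (Fin n) (Fin n) ℝ := G.adjMatrix ℝ + 1 with hMdef
  set y : Fin n → ℝ := fun v => if v = b then x a + x b else x v with hydef
  set e : Finset (Fin n) := univ.erase a with hedef
  set e' : Finset (Fin n) := e.erase b with he'def
  have hbe : b ∈ e := by simp [hedef, Ne.symm hab]
  -- matrix entries
  have hMaa : M a a = 1 := by simp [hMdef, Matrix.one_apply]
  have hMbb : M b b = 1 := by simp [hMdef, Matrix.one_apply]
  have hMab : M a b = 1 := by simp [hMdef, Matrix.one_apply, hadj, hab]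
  have hMba : M b a = 1 := by simp [hMdef, Matrix.one_apply, hadj.symm, Ne.symm hab]
  have htw : ∀ j ∈ e', M a j = M b j := by
    intro j hj
    have hja : j ≠ a := by simp [he'def, hedef] at hj; exact hj.2
    have hjb : j ≠ b := by simp [he'def] at hj; exact hj.1
    have hiff : G.Adj a j ↔ G.Adj b j := by
      have := Set.ext_iff.mp htwin j
      simpa [SimpleGraph.mem_neighborSet, hjb, hja] using this
    simp [hMdef, Matrix.one_apply, hiff, (Ne.symm hja : a ≠ j), (Ne.symm hjb : b ≠ j)]
  have htw' : ∀ i ∈ e', M i a = M i b := by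
    intro i hi
    have hsymm : ∀ p q : Fin n, M p q = M q p := by
      intro p q
      simp [hMdef, Matrix.one_apply, G.adj_comm, eq_comm]
    rw [hsymm i a, hsymm i b]; exact htw i hi
  -- y values
  have hyb : y b = x a + x b := by simp [hydef]
  have hy : ∀ w ∈ e', y w = x w := by
    intro w hw
    have : w ≠ b := by simp [he'def] at hw; exact hw.1
    simp [hydef, this]
  -- subtype sums to erase sums
  have hsub : ∀ (f : Fin n → ℝ), (∑ v : {v : Fin n // v ≠ a}, f ↑v) = ∑ v ∈ e, f v := by
    intro f
    exact (Finset.sum_subtype _ (fun v => by simp [hedef, Finset.mem_erase]) f).symm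
  have hent : ∀ v w : {v : Fin n // v ≠ a},
      ((G.induce {v | v ≠ a}).adjMatrix ℝ + 1) v w = M ↑v ↑w := by
    intro v w
    simp [hMdef, Matrix.add_apply, Matrix.one_apply, SimpleGraph.comap_adj,
      Function.Embedding.coe_subtype, Subtype.ext_iff]
  have hrhs : ((fun v : {v : Fin n // v ≠ a} => if (v : Fin n) = b then x a + x b else x v) ⬝ᵥ
          (((G.induce {v | v ≠ a}).adjMatrix ℝ + 1) *ᵥ
            fun v : {v : Fin n // v ≠ a} => if (v : Fin n) = b then x a + x b else x v))
      = ∑ v ∈ e, y v * ∑ w ∈ e, M v w * y w := by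
    simp only [dotProduct, mulVec, hent]
    rw [← hsub fun v => y v * ∑ w ∈ e, M v w * y w]
    refine Finset.sum_congr rfl fun v _ => ?_
    rw [← hsub fun w => M v w * y w]
  rw [hrhs]
  -- splitting lemmas
  have hsplitU : ∀ f : Fin n → ℝ, ∑ j, f j = f a + f b + ∑ j ∈ e', f j := by
    intro f
    rw [← Finset.add_sum_erase univ f (mem_univ a), ← hedef, ← Finset.add_sum_erase e f hbe,
      ← he'def, add_assoc]
  have hsplitE : ∀ f : Fin n → ℝ, ∑ j ∈ e, f j = f b + ∑ j ∈ e', f j := by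
    intro f
    rw [← Finset.add_sum_erase e f hbe, ← he'def]
  show (∑ i, x i * ∑ j, M i j * x j) = _
  rw [hsplitU fun i => x i * ∑ j, M i j * x j, hsplitE fun v => y v * ∑ w ∈ e, M v w * y w]
  simp only [hsplitU fun j => M _ j * x j, hsplitE fun w => M _ w * y w]
  have hS : ∀ v, ∑ w ∈ e', M v w * y w = ∑ w ∈ e', M v w * x w := fun v =>
    Finset.sum_congr rfl fun w hw => by rw [hy w hw]
  have hSa : ∑ j ∈ e', M a j * x j = ∑ j ∈ e', M b j * x j :=
    Finset.sum_congr rfl fun j hj => by rw [htw j hj]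
  have hbig : ∑ i ∈ e', y i * (M i b * y b + ∑ w ∈ e', M i w * y w)
      = ∑ i ∈ e', x i * (M i a * x a + M i b * x b + ∑ j ∈ e', M i j * x j) :=
    Finset.sum_congr rfl fun i hi => by rw [hy i hi, hyb, htw' i hi, hS i]; ring
  rw [hbig, hMaa, hMbb, hMab, hMba, hyb, hSa, hS b]
  ring
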